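/- Let α ∈ ℝⁿ with 1ᵀα ≠ 0. Define f_α(w) = log w − ((αᵀ log w)/(1ᵀα))·1 for w ∈ ℝⁿ with all entries positive. Then f_α restricted to {w : all wᵢ > 0, 1ᵀw = 1} is a bijection onto {β ∈ ℝⁿ : αᵀβ = 0}, with inverse β ↦ exp(β)/(1ᵀ exp(β)) (exp applied entrywise). -/
import Mathlib


noncomputable def fAlpha {n : ℕ} (α w : Fin n → ℝ) : Fin n → ℝ :=
  (fun i => Real.log (w i)) -
    ((∑ i, α i * Real.log (w i)) / (∑ i, α i)) • (1 : Fin n → ℝ)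

lemma fAlpha_apply {n : ℕ} (α w : Fin n → ℝ) (i : Fin n) :
    fAlpha α w i = Real.log (w i) - (∑ j, α j * Real.log (w j)) / (∑ j, α j) := by
  simp [fAlpha]

lemma fAlpha_left_inv {n : ℕ} (α : Fin n → ℝ) (w : Fin n → ℝ)
    (hw : ∀ i, 0 < w i) (hs : (∑ i, w i) = 1) :
    (fun i => Real.exp (fAlpha α w i) / (∑ j, Real.exp (fAlpha α w j))) = w := by
  set c : ℝ := (∑ j, α j * Real.log (w j)) / (∑ j, α j) with hc
  have hexp : ∀ i, Real.exp (fAlpha α w i) = w i * Real.exp (-c) := by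
    intro i
    rw [fAlpha_apply, ← hc, sub_eq_add_neg, Real.exp_add, Real.exp_log (hw i)]
  have hsum : (∑ j, Real.exp (fAlpha α w j)) = Real.exp (-c) := by
    simp_rw [hexp]
    rw [← Finset.sum_mul, hs, one_mul]
  funext i
  rw [hexp, hsum, mul_div_assoc, div_self (Real.exp_ne_zero _), mul_one]

lemma fAlpha_right_inv {n : ℕ} (hn : 1 ≤ n) (α : Fin n → ℝ) (hα : (∑ i, α i) ≠ 0)
    (β : Fin n → ℝ) (hβ : (∑ i, α i * β i) = 0) :
    fAlpha α (fun i => Real.exp (β i) / (∑ j, Real.exp (β j))) = β := by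
  have hS : 0 < ∑ j, Real.exp (β j) := by
    have : Nonempty (Fin n) := Fin.pos_iff_nonempty.mp hn
    exact Finset.sum_pos (fun j _ => Real.exp_pos _) Finset.univ_nonempty
  have hlog : ∀ i, Real.log (Real.exp (β i) / (∑ j, Real.exp (β j)))
      = β i - Real.log (∑ j, Real.exp (β j)) := by
    intro i
    rw [Real.log_div (Real.exp_ne_zero _) (ne_of_gt hS), Real.log_exp]
  funext i
  rw [fAlpha_apply, hlog]
  have : (∑ j, α j * Real.log (Real.exp (β j) / (∑ k, Real.exp (β k))))
      = -(∑ j, α j) * Real.log (∑ j, Real.exp (β j)) := by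
    simp_rw [hlog, mul_sub]
    rw [Finset.sum_sub_distrib, hβ, ← Finset.sum_mul]
    ring
  rw [this]
  field_simp
  ring

theorem fAlpha_bijection {n : ℕ} (hn : 1 ≤ n)
    (α : Fin n → ℝ) (hα : (∑ i, α i) ≠ 0) :
    Set.BijOn (fAlpha α)
      {w : Fin n → ℝ | (∀ i, 0 < w i) ∧ (∑ i, w i) = 1}
      {β : Fin n → ℝ | (∑ i, α i * β i) = 0} ∧
    (∀ w ∈ {w : Fin n → ℝ | (∀ i, 0 < w i) ∧ (∑ i, w i) = 1},
      (fun i => Real.exp (fAlpha α w i) / (∑ j, Real.exp (fAlpha α w j))) = w) ∧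
    (∀ β ∈ {β : Fin n → ℝ | (∑ i, α i * β i) = 0},
      fAlpha α (fun i => Real.exp (β i) / (∑ j, Real.exp (β j))) = β) := by
  have hmaps : Set.MapsTo (fAlpha α)
      {w : Fin n → ℝ | (∀ i, 0 < w i) ∧ (∑ i, w i) = 1}
      {β : Fin n → ℝ | (∑ i, α i * β i) = 0} := by
    rintro w ⟨hw, hs⟩
    show (∑ i, α i * fAlpha α w i) = 0
    simp_rw [fAlpha_apply, mul_sub]
    rw [Finset.sum_sub_distrib, ← Finset.sum_mul, mul_comm, div_mul_cancel₀ _ hα, sub_self]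
  refine ⟨⟨hmaps, ?_, ?_⟩, fun w hw => fAlpha_left_inv α w hw.1 hw.2,
    fun β hβ => fAlpha_right_inv hn α hα β hβ⟩
  · intro w hw w' hw' h
    have := fAlpha_left_inv α w hw.1 hw.2
    rw [h, fAlpha_left_inv α w' hw'.1 hw'.2] at this
    exact this.symm
  · intro β hβ
    have hS : 0 < ∑ j, Real.exp (β j) := by
      have : Nonempty (Fin n) := Fin.pos_iff_nonempty.mp hn
      exact Finset.sum_pos (fun j _ => Real.exp_pos _) Finset.univ_nonempty
    refine ⟨(fun i => Real.exp (β i) / (∑ j, Real.exp (β j))), ⟨fun i => by positivity, ?_⟩,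
      fAlpha_right_inv hn α hα β hβ⟩
    rw [← Finset.sum_div, div_self (ne_of_gt hS)]
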